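/- Let Ω ⊂ ℝⁿ be an open set, K ⊂ Ω a non-empty compact set, and λ > 0 with dist²(K, ∂Ω) > 1/λ. Let χ_K be the characteristic function of K on ℝⁿ and χ_K^Ω its restriction to closure(Ω). Then for every x ∈ closure(Ω): M^λ_Ω(χ_K^Ω)(x) = M^λ(χ_K)(x), M_{λ,Ω}(M^λ_Ω(χ_K^Ω))(x) = M_λ(M^λ(χ_K))(x), and consequently C^u_{λ,Ω}(χ_K^Ω)(x) = C^u_λ(χ_K)(x). -/
import Mathlib


noncomputable section
attribute [local instance] Classical.propDecidable

/-- Global lower Moreau envelope `M_λ(g)(x) = inf_{y∈ℝⁿ} {g(y) + λ|y−x|²}`. -/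
def moreauLower {n : ℕ} (lam : ℝ) (g : EuclideanSpace ℝ (Fin n) → ℝ)
    (x : EuclideanSpace ℝ (Fin n)) : ℝ :=
  ⨅ y : EuclideanSpace ℝ (Fin n), (g y + lam * ‖y - x‖ ^ 2)

/-- Global upper Moreau envelope `M^λ(g)(x) = sup_{y∈ℝⁿ} {g(y) − λ|y−x|²}`. -/
def moreauUpper {n : ℕ} (lam : ℝ) (g : EuclideanSpace ℝ (Fin n) → ℝ)
    (x : EuclideanSpace ℝ (Fin n)) : ℝ :=
  ⨆ y : EuclideanSpace ℝ (Fin n), (g y - lam * ‖y - x‖ ^ 2)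

/-- Local lower Moreau envelope `M_{λ,Ω}(g)(x) = inf_{y∈closure Ω} {g(y) + λ|y−x|²}`. -/
def moreauLowerLoc {n : ℕ} (lam : ℝ) (Ω : Set (EuclideanSpace ℝ (Fin n)))
    (g : EuclideanSpace ℝ (Fin n) → ℝ) (x : EuclideanSpace ℝ (Fin n)) : ℝ :=
  sInf ((fun y => g y + lam * ‖y - x‖ ^ 2) '' closure Ω)

/-- Local upper Moreau envelope `M^λ_Ω(g)(x) = sup_{y∈closure Ω} {g(y) − λ|y−x|²}`. -/
def moreauUpperLoc {n : ℕ} (lam : ℝ) (Ω : Set (EuclideanSpace ℝ (Fin n)))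
    (g : EuclideanSpace ℝ (Fin n) → ℝ) (x : EuclideanSpace ℝ (Fin n)) : ℝ :=
  sSup ((fun y => g y - lam * ‖y - x‖ ^ 2) '' closure Ω)

/-- The extension of `f` equal to `f` on `Ω` and to `inf_Ω f` off `Ω`
(this realizes both `f⁻_Ω̄` on `closure Ω` and `f⁻_ℝⁿ` on `ℝⁿ`). -/
def extMinus {n : ℕ} (Ω : Set (EuclideanSpace ℝ (Fin n)))
    (f : EuclideanSpace ℝ (Fin n) → ℝ) (x : EuclideanSpace ℝ (Fin n)) : ℝ :=
  if x ∈ Ω then f x else sInf (f '' Ω)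

/-- The extension of `f` equal to `f` on `Ω` and to `sup_Ω f` off `Ω`
(this realizes both `f⁺_Ω̄` on `closure Ω` and `f⁺_ℝⁿ` on `ℝⁿ`). -/
def extPlus {n : ℕ} (Ω : Set (EuclideanSpace ℝ (Fin n)))
    (f : EuclideanSpace ℝ (Fin n) → ℝ) (x : EuclideanSpace ℝ (Fin n)) : ℝ :=
  if x ∈ Ω then f x else sSup (f '' Ω)

/-- The characteristic function `χ_K` of a set `K`. -/
def charFun {n : ℕ} (K : Set (EuclideanSpace ℝ (Fin n)))
    (x : EuclideanSpace ℝ (Fin n)) : ℝ :=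
  if x ∈ K then 1 else 0


open Set in
/-- A segment from a point of `closure s` to a point outside `closure s`
meets `frontier s`, at a point no farther from the start than the end. -/
lemma seg_frontier {n : ℕ} {s : Set (EuclideanSpace ℝ (Fin n))}
    {x y : EuclideanSpace ℝ (Fin n)}
    (hx : x ∈ closure s) (hy : y ∉ closure s) :
    ∃ z, z ∈ frontier s ∧ z ∈ closure s ∧ dist x z ≤ dist x y := by
  have htc : IsClosed (closure s) := isClosed_closure
  have hfr : frontier (closure s) = closure s \ interior (closure s) := htc.frontier_eq
  have key : ∃ z ∈ segment ℝ x y, z ∈ frontier (closure s) := by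
    by_contra hcon
    push_neg at hcon
    have hsub : segment ℝ x y ⊆ interior (closure s) ∪ (closure s)ᶜ := by
      intro z hz
      by_cases hzt : z ∈ closure s
      · left
        by_contra hzi
        exact hcon z hz (hfr ▸ ⟨hzt, hzi⟩)
      · right; exact hzt
    have hdisj : Disjoint (interior (closure s)) (closure s)ᶜ :=
      disjoint_compl_right.mono_left interior_subset
    rcases ((convex_segment x y).isPreconnected).subset_or_subset isOpen_interior
        htc.isOpen_compl hdisj hsub with h | h
    · exact hy (interior_subset (h (right_mem_segment ℝ x y)))
    · exact (h (left_mem_segment ℝ x y)) hx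
  obtain ⟨z, hzseg, hzfr⟩ := key
  have hd : dist x z + dist z y = dist x y := dist_add_dist_of_mem_segment hzseg
  exact ⟨z, frontier_closure_subset hzfr, by simpa using hzfr.1, by linarith [dist_nonneg (x := z) (y := y)]⟩

/-- For `Ω ⊂ ℝⁿ` open, `K ⊂ Ω` non-empty compact and `dist²(K,∂Ω) > 1/λ`,
the local and global (mixed) Moreau envelopes of `χ_K` agree on `closure Ω`;
consequently `C^u_{λ,Ω}(χ_K^Ω)(x) = C^u_λ(χ_K)(x)` there. -/
theorem charFun_local_eq_global {n : ℕ} (Ω K : Set (EuclideanSpace ℝ (Fin n)))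
    (hΩo : IsOpen Ω) (hK : IsCompact K) (hKne : K.Nonempty) (hKΩ : K ⊆ Ω)
    (lam : ℝ) (hlam : 0 < lam)
    (hdist : (sInf {d : ℝ | ∃ y ∈ K, ∃ z ∈ frontier Ω, d = dist y z}) ^ 2 > 1 / lam) :
    ∀ x ∈ closure Ω,
      moreauUpperLoc lam Ω (charFun K) x = moreauUpper lam (charFun K) x ∧
      moreauLowerLoc lam Ω (moreauUpperLoc lam Ω (charFun K)) x
          = moreauLower lam (moreauUpper lam (charFun K)) x := by
  intro x hx
  have hKc : K ⊆ closure Ω := hKΩ.trans subset_closure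
  have hf0 : ∀ y, (0:ℝ) ≤ charFun K y := fun y => by unfold charFun; split <;> norm_num
  have hf1 : ∀ y, charFun K y ≤ 1 := fun y => by unfold charFun; split <;> norm_num
  have hbdd : ∀ p : EuclideanSpace ℝ (Fin n),
      BddAbove (Set.range fun y => charFun K y - lam * ‖y - p‖ ^ 2) := by
    intro p
    refine ⟨1, ?_⟩
    rintro _ ⟨y, rfl⟩
    have h1 := hf1 y
    have h2 : 0 ≤ lam * ‖y - p‖ ^ 2 := mul_nonneg hlam.le (sq_nonneg _)
    dsimp only
    linarith
  have hbddloc : ∀ p, BddAbove ((fun y => charFun K y - lam * ‖y - p‖ ^ 2) '' closure Ω) :=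
    fun p => (hbdd p).mono (Set.image_subset_range _ _)
  have part1 : ∀ p ∈ closure Ω,
      moreauUpperLoc lam Ω (charFun K) p = moreauUpper lam (charFun K) p := by
    intro p hp
    have hne : ((fun y => charFun K y - lam * ‖y - p‖ ^ 2) '' closure Ω).Nonempty :=
      ⟨_, ⟨p, hp, rfl⟩⟩
    unfold moreauUpperLoc moreauUpper
    apply le_antisymm
    · apply csSup_le hne
      rintro _ ⟨y, _, rfl⟩
      exact le_ciSup (hbdd p) y
    · apply ciSup_le
      intro y
      by_cases hyK : y ∈ K
      · exact le_csSup (hbddloc p) ⟨y, hKc hyK, rfl⟩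
      · have hcf : charFun K y = 0 := by unfold charFun; rw [if_neg hyK]
        have hpp : ‖p - p‖ = (0:ℝ) := by simp
        have h2 : 0 ≤ lam * ‖y - p‖ ^ 2 := mul_nonneg hlam.le (sq_nonneg _)
        have h1 : charFun K y - lam * ‖y - p‖ ^ 2 ≤ charFun K p - lam * ‖p - p‖ ^ 2 := by
          rw [hcf, hpp]
          have := hf0 p
          nlinarith
        exact h1.trans (le_csSup (hbddloc p) ⟨p, hp, rfl⟩)
  refine ⟨part1 x hx, ?_⟩
  have hU0 : ∀ y, 0 ≤ moreauUpper lam (charFun K) y := by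
    intro y
    unfold moreauUpper
    have h := le_ciSup (hbdd y) y
    have hyy : ‖y - y‖ = (0:ℝ) := by simp
    rw [hyy] at h
    have := hf0 y
    nlinarith
  have himg : (fun y => moreauUpperLoc lam Ω (charFun K) y + lam * ‖y - x‖ ^ 2) '' closure Ω
      = (fun y => moreauUpper lam (charFun K) y + lam * ‖y - x‖ ^ 2) '' closure Ω :=
    Set.image_congr (fun z hz => by rw [part1 z hz])
  have hbddB : BddBelow (Set.range fun y => moreauUpper lam (charFun K) y + lam * ‖y - x‖ ^ 2) := by
    refine ⟨0, ?_⟩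
    rintro _ ⟨y, rfl⟩
    exact add_nonneg (hU0 y) (mul_nonneg hlam.le (sq_nonneg _))
  have hbddBloc :
      BddBelow ((fun y => moreauUpper lam (charFun K) y + lam * ‖y - x‖ ^ 2) '' closure Ω) :=
    hbddB.mono (Set.image_subset_range _ _)
  have hneB : ((fun y => moreauUpper lam (charFun K) y + lam * ‖y - x‖ ^ 2) '' closure Ω).Nonempty :=
    ⟨_, ⟨x, hx, rfl⟩⟩
  unfold moreauLowerLoc moreauLower
  rw [himg]
  apply le_antisymm
  · apply le_ciInf
    intro y
    by_cases hyΩ : y ∈ closure Ω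
    · exact csInf_le hbddBloc ⟨y, hyΩ, rfl⟩
    · obtain ⟨z, hzfr, hzΩ, hdz⟩ := seg_frontier hx hyΩ
      obtain ⟨k, hk⟩ := hKne
      have hSne : Set.Nonempty {d : ℝ | ∃ y ∈ K, ∃ z ∈ frontier Ω, d = dist y z} :=
        ⟨dist k z, k, hk, z, hzfr, rfl⟩
      have hSbb : BddBelow {d : ℝ | ∃ y ∈ K, ∃ z ∈ frontier Ω, d = dist y z} := by
        refine ⟨0, ?_⟩
        rintro d ⟨a, _, b, _, rfl⟩
        exact dist_nonneg
      have hD0 : 0 ≤ sInf {d : ℝ | ∃ y ∈ K, ∃ z ∈ frontier Ω, d = dist y z} := by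
        apply le_csInf hSne
        rintro d ⟨a, _, b, _, rfl⟩
        exact dist_nonneg
      have hDlt : 1 < sInf {d : ℝ | ∃ y ∈ K, ∃ z ∈ frontier Ω, d = dist y z} ^ 2 * lam :=
        (div_lt_iff₀ hlam).mp hdist
      have hUz : moreauUpper lam (charFun K) z ≤ 0 := by
        unfold moreauUpper
        apply ciSup_le
        intro w
        by_cases hwK : w ∈ K
        · have hdw : sInf {d : ℝ | ∃ y ∈ K, ∃ z ∈ frontier Ω, d = dist y z} ≤ dist w z :=
            csInf_le hSbb ⟨w, hwK, z, hzfr, rfl⟩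
          have hdwn : dist w z = ‖w - z‖ := dist_eq_norm w z
          have hsq : sInf {d : ℝ | ∃ y ∈ K, ∃ z ∈ frontier Ω, d = dist y z} ^ 2 ≤ ‖w - z‖ ^ 2 := by
            rw [← hdwn]
            exact pow_le_pow_left₀ hD0 hdw 2
          have hcf : charFun K w = 1 := by unfold charFun; rw [if_pos hwK]
          rw [hcf]
          nlinarith
        · have hcf : charFun K w = 0 := by unfold charFun; rw [if_neg hwK]
          rw [hcf]
          nlinarith [mul_nonneg hlam.le (sq_nonneg ‖w - z‖)]
      have h1 : ‖z - x‖ ≤ ‖y - x‖ := by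
        rw [← dist_eq_norm, ← dist_eq_norm, dist_comm z x, dist_comm y x]
        exact hdz
      have hhz : moreauUpper lam (charFun K) z + lam * ‖z - x‖ ^ 2
          ≤ moreauUpper lam (charFun K) y + lam * ‖y - x‖ ^ 2 := by
        have h2 := hU0 y
        have h3 : ‖z - x‖ * ‖z - x‖ ≤ ‖y - x‖ * ‖y - x‖ :=
          mul_le_mul h1 h1 (norm_nonneg _) (norm_nonneg _)
        nlinarith [hUz, hlam.le, h3]
      exact (csInf_le hbddBloc ⟨z, hzΩ, rfl⟩).trans hhz
  · apply le_csInf hneB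
    rintro _ ⟨y, hy, rfl⟩
    exact ciInf_le hbddB y
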